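/- Let N ≥ 1 and k₁,…,k_{n−1} ≥ 1 be integers. Let 𝒫 = ([0,N]×[0,k₁N]×⋯×[0,k_{n−1}N]) ∩ ℤⁿ and let ℒ be the set of lines ℓ_{a,b}: t ↦ (t, a₁+tb₁, …, a_{n−1}+tb_{n−1}) with a ∈ ([1,k₁N]×⋯×[1,k_{n−1}N])∩ℤ^{n−1} and b ∈ ([1,k₁]×⋯×[1,k_{n−1}])∩ℤ^{n−1}. Then #𝒫 ∼ Nⁿ∏k_j, #ℒ = N^{n−1}∏k_j², the number of incidences I(𝒫,ℒ) = #{(p,ℓ) : p∈𝒫, ℓ∈ℒ, p∈ℓ} satisfies I(𝒫,ℒ) ∼ Nⁿ∏k_j², and consequently I(𝒫,ℒ) ∼ (#𝒫)^{2/(n+1)}(#ℒ)^{n/(n+1)}. -/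

import Mathlib

open scoped Classical

noncomputable section

set_option maxHeartbeats 1000000

/-- The lattice points/lines incidence example in `ℝ^{n+1}`: the grid
`𝒫 = [0,N]×[0,k₁N]×⋯×[0,k_nN]` and the lines `t ↦ (t, a + t b)` with
`a ∈ [1,k₁N]×⋯×[1,k_nN]`, `b ∈ [1,k₁]×⋯×[1,k_n]` satisfy
`#𝒫 ∼ N^{n+1}∏k_j`, `#ℒ = N^n ∏k_j²`, `I(𝒫,ℒ) ∼ N^{n+1}∏k_j²`, and consequently
`I(𝒫,ℒ) ∼ (#𝒫)^{2/(n+2)} (#ℒ)^{(n+1)/(n+2)}`. -/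
theorem stmt15 (n : ℕ) (hn : 1 ≤ n) :
    ∃ c C : ℝ, 0 < c ∧ 0 < C ∧
      ∀ (N : ℕ) (k : Fin n → ℕ), 1 ≤ N → (∀ j, 1 ≤ k j) →
        let P : Finset (ℤ × (Fin n → ℤ)) :=
          (Finset.Icc (0:ℤ) (N:ℤ)) ×ˢ
            (Fintype.piFinset fun j => Finset.Icc (0:ℤ) ((k j : ℤ) * (N:ℤ)));
        let Lset : Finset ((Fin n → ℤ) × (Fin n → ℤ)) :=
          (Fintype.piFinset fun j => Finset.Icc (1:ℤ) ((k j : ℤ) * (N:ℤ))) ×ˢ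
            (Fintype.piFinset fun j => Finset.Icc (1:ℤ) ((k j : ℤ)));
        let I : ℕ := ∑ ab ∈ Lset,
          (P.filter fun p => ∀ j, p.2 j = ab.1 j + p.1 * ab.2 j).card;
        (c * (N:ℝ) ^ (n+1) * ∏ j, (k j : ℝ) ≤ (P.card : ℝ) ∧
          (P.card : ℝ) ≤ C * (N:ℝ) ^ (n+1) * ∏ j, (k j : ℝ)) ∧
        (Lset.card : ℝ) = (N:ℝ) ^ n * ∏ j, (k j : ℝ) ^ 2 ∧
        (c * (N:ℝ) ^ (n+1) * ∏ j, (k j : ℝ) ^ 2 ≤ (I : ℝ) ∧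
          (I : ℝ) ≤ C * (N:ℝ) ^ (n+1) * ∏ j, (k j : ℝ) ^ 2) ∧
        (c * (P.card : ℝ) ^ ((2:ℝ)/((n:ℝ)+2)) * (Lset.card : ℝ) ^ (((n:ℝ)+1)/((n:ℝ)+2))
            ≤ (I : ℝ) ∧
          (I : ℝ) ≤ C * (P.card : ℝ) ^ ((2:ℝ)/((n:ℝ)+2)) *
            (Lset.card : ℝ) ^ (((n:ℝ)+1)/((n:ℝ)+2))) := by
  refine ⟨((2:ℝ) ^ (3*n+6))⁻¹, (2:ℝ) ^ (3*n+6), by positivity, by positivity, ?_⟩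
  intro N k hN hk P Lset I
  have hPdef : P = (Finset.Icc (0:ℤ) (N:ℤ)) ×ˢ
      (Fintype.piFinset fun j => Finset.Icc (0:ℤ) ((k j : ℤ) * (N:ℤ))) := rfl
  have hLdef : Lset = (Fintype.piFinset fun j => Finset.Icc (1:ℤ) ((k j : ℤ) * (N:ℤ))) ×ˢ
      (Fintype.piFinset fun j => Finset.Icc (1:ℤ) ((k j : ℤ))) := rfl
  have hIdef : I = ∑ ab ∈ Lset,
      (P.filter fun p => ∀ j, p.2 j = ab.1 j + p.1 * ab.2 j).card := rfl
  -- basic facts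
  have hN1 : (1:ℝ) ≤ (N:ℝ) := by exact_mod_cast hN
  have hk1 : ∀ j, (1:ℝ) ≤ (k j:ℝ) := fun j => by exact_mod_cast hk j
  have cardIcc0 : ∀ m : ℕ, (Finset.Icc (0:ℤ) (m:ℤ)).card = m + 1 := by
    intro m; rw [Int.card_Icc]; omega
  have cardIcc1 : ∀ m : ℕ, (Finset.Icc (1:ℤ) (m:ℤ)).card = m := by
    intro m; rw [Int.card_Icc]; omega
  have hx : ∀ j, ((k j:ℤ) * (N:ℤ)) = ((k j * N : ℕ) : ℤ) := fun j => by push_cast; ring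
  set Kc : ℝ := ∏ j, (k j:ℝ) with hKc
  set K2 : ℝ := ∏ j, (k j:ℝ)^2 with hK2
  have hKcpos : 0 < Kc := Finset.prod_pos fun j _ => by linarith [hk1 j]
  have hK2pos : 0 < K2 := Finset.prod_pos fun j _ => by nlinarith [hk1 j]
  have hK2eq : K2 = Kc^2 := by rw [hK2, hKc, Finset.prod_pow]
  -- P card
  have hPcard : P.card = (N+1) * ∏ j, (k j * N + 1) := by
    rw [hPdef, Finset.card_product, Fintype.card_piFinset, cardIcc0]
    congr 1
    refine Finset.prod_congr rfl fun j _ => ?_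
    rw [hx j, cardIcc0]
  have hPR : (P.card : ℝ) = ((N:ℝ)+1) * ∏ j, ((k j:ℝ)*(N:ℝ)+1) := by
    rw [hPcard]; push_cast; ring
  have prodkN : ∏ j, ((k j:ℝ)*(N:ℝ)) = Kc * (N:ℝ)^n := by
    rw [Finset.prod_mul_distrib, Finset.prod_const, Finset.card_univ, Fintype.card_fin, hKc]
  have hPlb : (N:ℝ)^(n+1) * Kc ≤ (P.card:ℝ) := by
    rw [hPR]
    have e : (N:ℝ)^(n+1) * Kc = (N:ℝ) * ∏ j, ((k j:ℝ) * (N:ℝ)) := by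
      rw [prodkN]; ring
    rw [e]
    refine mul_le_mul (by linarith)
      (Finset.prod_le_prod (fun j _ => by positivity) (fun j _ => by linarith)) (by positivity)
      (by linarith)
  have hPub : (P.card:ℝ) ≤ 2^(n+1) * ((N:ℝ)^(n+1) * Kc) := by
    rw [hPR]
    have e : (2:ℝ)^(n+1) * ((N:ℝ)^(n+1) * Kc) = (2*(N:ℝ)) * ∏ j, (2*((k j:ℝ) * (N:ℝ))) := by
      rw [Finset.prod_mul_distrib, prodkN, Finset.prod_const, Finset.card_univ,
        Fintype.card_fin]
      ring
    rw [e]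
    refine mul_le_mul (by linarith)
      (Finset.prod_le_prod (fun j _ => by positivity) (fun j _ => ?_)) (by positivity)
      (by positivity)
    have h1 : (1:ℝ) ≤ (k j:ℝ)*(N:ℝ) := by nlinarith [hk1 j, hN1]
    linarith
  -- L card
  have hLcard : (Lset.card : ℝ) = (N:ℝ) ^ n * K2 := by
    rw [hLdef, Finset.card_product, Fintype.card_piFinset, Fintype.card_piFinset]
    have e1 : ∀ j : Fin n, (Finset.Icc (1:ℤ) ((k j:ℤ) * (N:ℤ))).card = k j * N := fun j => by
      rw [hx j, cardIcc1]
    have e2 : ∀ j : Fin n, (Finset.Icc (1:ℤ) ((k j:ℤ))).card = k j := fun j => by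
      have := cardIcc1 (k j); simpa using this
    simp_rw [e1, e2]
    push_cast
    rw [Finset.prod_mul_distrib, Finset.prod_const]
    simp only [Finset.card_univ, Fintype.card_fin]
    rw [hK2, show (∏ j : Fin n, ((k j:ℝ))^2) = (∏ j : Fin n, (k j:ℝ)) * ∏ j : Fin n, (k j:ℝ) by
      rw [← Finset.prod_mul_distrib]; exact Finset.prod_congr rfl fun j _ => sq ((k j:ℝ)) ▸ rfl]
    ring
  -- the per-line incidence count
  have key : ∀ a b : Fin n → ℤ,
      (P.filter fun p => ∀ j, p.2 j = a j + p.1 * b j).card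
        = ∑ t ∈ Finset.Icc (0:ℤ) (N:ℤ),
            if (∀ j, 0 ≤ a j + t * b j ∧ a j + t * b j ≤ (k j:ℤ)*(N:ℤ)) then 1 else 0 := by
    intro a b
    rw [hPdef, ← Finset.card_filter]
    refine Finset.card_bij (fun p _ => p.1) ?_ ?_ ?_
    · intro p hp
      simp only [Finset.mem_filter, Finset.mem_product, Fintype.mem_piFinset,
        Finset.mem_Icc] at hp ⊢
      refine ⟨hp.1.1, fun j => ?_⟩
      rw [← hp.2 j]
      exact hp.1.2 j
    · intro p hp q hq he
      simp only [Finset.mem_filter] at hp hq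
      have he' : p.1 = q.1 := he
      have h2 : p.2 = q.2 := by
        funext j
        rw [hp.2 j, hq.2 j, he']
      exact Prod.ext he' h2
    · intro t ht
      simp only [Finset.mem_filter, Finset.mem_Icc] at ht
      refine ⟨(t, fun j => a j + t * b j), ?_, rfl⟩
      simp only [Finset.mem_filter, Finset.mem_product, Fintype.mem_piFinset, Finset.mem_Icc]
      exact ⟨ht, fun j => trivial⟩
  -- the factorized incidence count
  set F : Fin n → ℤ → ℕ := fun j t =>
    ∑ x ∈ Finset.Icc (1:ℤ) ((k j:ℤ)*(N:ℤ)), ∑ y ∈ Finset.Icc (1:ℤ) ((k j:ℤ)),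
      if (0 ≤ x + t*y ∧ x + t*y ≤ (k j:ℤ)*(N:ℤ)) then (1:ℕ) else 0 with hF
  have hIsum : I = ∑ t ∈ Finset.Icc (0:ℤ) (N:ℤ), ∏ j, F j t := by
    rw [hIdef, hLdef]
    rw [Finset.sum_congr rfl fun ab _ => key ab.1 ab.2, Finset.sum_comm]
    refine Finset.sum_congr rfl fun t _ => ?_
    rw [Finset.sum_product]
    have hb : ∀ (x y : Fin n → ℤ),
        (if (∀ j, 0 ≤ x j + t * y j ∧ x j + t * y j ≤ (k j:ℤ)*(N:ℤ)) then (1:ℕ) else 0)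
          = ∏ j, if (0 ≤ x j + t * y j ∧ x j + t * y j ≤ (k j:ℤ)*(N:ℤ)) then 1 else 0 := by
      intro x y; rw [Finset.prod_boole]; simp
    simp_rw [hb]
    calc ∑ x ∈ (Fintype.piFinset fun j => Finset.Icc (1:ℤ) ((k j : ℤ) * (N:ℤ))),
          ∑ y ∈ (Fintype.piFinset fun j => Finset.Icc (1:ℤ) ((k j : ℤ))),
          ∏ j, (if (0 ≤ x j + t * y j ∧ x j + t * y j ≤ (k j:ℤ)*(N:ℤ)) then (1:ℕ) else 0)
        = ∑ x ∈ (Fintype.piFinset fun j => Finset.Icc (1:ℤ) ((k j : ℤ) * (N:ℤ))),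
          ∏ j, ∑ v ∈ Finset.Icc (1:ℤ) ((k j:ℤ)),
            (if (0 ≤ x j + t * v ∧ x j + t * v ≤ (k j:ℤ)*(N:ℤ)) then (1:ℕ) else 0) :=
          Finset.sum_congr rfl fun x _ => (Finset.prod_univ_sum
            (fun j => Finset.Icc (1:ℤ) ((k j:ℤ)))
            (fun j v => if (0 ≤ x j + t * v ∧ x j + t * v ≤ (k j:ℤ)*(N:ℤ)) then (1:ℕ) else 0)).symm
      _ = ∏ j, ∑ u ∈ Finset.Icc (1:ℤ) ((k j:ℤ)*(N:ℤ)), ∑ v ∈ Finset.Icc (1:ℤ) ((k j:ℤ)),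
            (if (0 ≤ u + t * v ∧ u + t * v ≤ (k j:ℤ)*(N:ℤ)) then (1:ℕ) else 0) :=
          (Finset.prod_univ_sum
            (fun j => Finset.Icc (1:ℤ) ((k j:ℤ)*(N:ℤ)))
            (fun j u => ∑ v ∈ Finset.Icc (1:ℤ) ((k j:ℤ)),
              if (0 ≤ u + t * v ∧ u + t * v ≤ (k j:ℤ)*(N:ℤ)) then (1:ℕ) else 0)).symm
      _ = ∏ j, F j t := rfl
  -- bounds on F
  have hFub : ∀ j t, (F j t : ℝ) ≤ (k j:ℝ)^2 * (N:ℝ) := by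
    intro j t
    have h1 : F j t ≤ (k j * N) * k j := by
      have : F j t ≤ ∑ x ∈ Finset.Icc (1:ℤ) ((k j:ℤ)*(N:ℤ)),
          ∑ y ∈ Finset.Icc (1:ℤ) ((k j:ℤ)), 1 := by
        refine Finset.sum_le_sum fun x _ => Finset.sum_le_sum fun y _ => ?_
        split <;> simp
      simp only [Finset.sum_const, smul_eq_mul, mul_one] at this
      rw [hx j, cardIcc1, cardIcc1] at this
      exact this
    have h2 := (Nat.cast_le (α := ℝ)).2 h1
    push_cast at h2
    exact h2.trans (le_of_eq (by ring))
  have hFlb : ∀ (j : Fin n) (t : ℤ), 0 ≤ t → 2*t ≤ (N:ℤ) →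
      (k j:ℤ)^2 * (N:ℤ) ≤ 2 * (F j t : ℤ) := by
    intro j t ht0 ht2
    have step1 : ∀ y : ℤ, y ∈ Finset.Icc (1:ℤ) ((k j):ℤ) →
        ((k j:ℤ)*(N:ℤ) - t*y) ≤
          ((∑ x ∈ Finset.Icc (1:ℤ) ((k j:ℤ)*(N:ℤ)),
            if (0 ≤ x + t*y ∧ x + t*y ≤ (k j:ℤ)*(N:ℤ)) then (1:ℕ) else 0 : ℕ) : ℤ) := by
      intro y hy
      rw [Finset.mem_Icc] at hy
      have hty : 0 ≤ t * y := mul_nonneg ht0 (by linarith [hy.1])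
      have hsub : Finset.Icc (1:ℤ) ((k j:ℤ)*(N:ℤ) - t*y) ⊆
          (Finset.Icc (1:ℤ) ((k j:ℤ)*(N:ℤ))).filter
            (fun x => 0 ≤ x + t*y ∧ x + t*y ≤ (k j:ℤ)*(N:ℤ)) := by
        intro x hx'
        rw [Finset.mem_Icc] at hx'
        simp only [Finset.mem_filter, Finset.mem_Icc]
        exact ⟨⟨hx'.1, by linarith [hx'.2]⟩, by constructor <;> linarith [hx'.1, hx'.2]⟩
      have h2 : ((Finset.Icc (1:ℤ) ((k j:ℤ)*(N:ℤ) - t*y)).card : ℤ) ≤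
          (((Finset.Icc (1:ℤ) ((k j:ℤ)*(N:ℤ))).filter
            (fun x => 0 ≤ x + t*y ∧ x + t*y ≤ (k j:ℤ)*(N:ℤ))).card : ℤ) := by
        exact_mod_cast Finset.card_le_card hsub
      rw [Int.card_Icc] at h2
      rw [← Finset.card_filter]
      omega
    have h3 : (k j:ℤ) * ((k j:ℤ)*(N:ℤ) - t*(k j:ℤ)) ≤ (F j t : ℤ) := by
      have e : (F j t : ℤ) = ∑ y ∈ Finset.Icc (1:ℤ) ((k j):ℤ),
          ((∑ x ∈ Finset.Icc (1:ℤ) ((k j:ℤ)*(N:ℤ)),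
            if (0 ≤ x + t*y ∧ x + t*y ≤ (k j:ℤ)*(N:ℤ)) then (1:ℕ) else 0 : ℕ) : ℤ) := by
        push_cast [hF]
        rw [Finset.sum_comm]
      rw [e]
      have h4 : ∑ y ∈ Finset.Icc (1:ℤ) ((k j):ℤ), ((k j:ℤ)*(N:ℤ) - t*(k j:ℤ))
          ≤ ∑ y ∈ Finset.Icc (1:ℤ) ((k j):ℤ),
            ((∑ x ∈ Finset.Icc (1:ℤ) ((k j:ℤ)*(N:ℤ)),
              if (0 ≤ x + t*y ∧ x + t*y ≤ (k j:ℤ)*(N:ℤ)) then (1:ℕ) else 0 : ℕ) : ℤ) := by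
        refine Finset.sum_le_sum fun y hy => le_trans ?_ (step1 y hy)
        rw [Finset.mem_Icc] at hy
        have : t * y ≤ t * (k j:ℤ) := mul_le_mul_of_nonneg_left hy.2 ht0
        linarith
      calc (k j:ℤ) * ((k j:ℤ)*(N:ℤ) - t*(k j:ℤ))
          = ∑ y ∈ Finset.Icc (1:ℤ) ((k j):ℤ), ((k j:ℤ)*(N:ℤ) - t*(k j:ℤ)) := by
            rw [Finset.sum_const, cardIcc1]
            simp [nsmul_eq_mul]
        _ ≤ _ := h4
    have hk1' : (1:ℤ) ≤ (k j:ℤ) := by exact_mod_cast hk j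
    nlinarith [h3, mul_nonneg (sq_nonneg (k j:ℤ)) (sub_nonneg.2 ht2)]
  -- I as a real sum
  have hIR : (I:ℝ) = ∑ t ∈ Finset.Icc (0:ℤ) (N:ℤ), ∏ j, (F j t : ℝ) := by
    rw [hIsum]; push_cast; rfl
  -- upper bound for I
  have hIub : (I:ℝ) ≤ 2 * ((N:ℝ)^(n+1) * K2) := by
    rw [hIR]
    have h1 : ∑ t ∈ Finset.Icc (0:ℤ) (N:ℤ), ∏ j, (F j t:ℝ)
        ≤ ∑ _t ∈ Finset.Icc (0:ℤ) (N:ℤ), ∏ j, ((k j:ℝ)^2 * (N:ℝ)) :=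
      Finset.sum_le_sum fun t _ =>
        Finset.prod_le_prod (fun j _ => by positivity) (fun j _ => hFub j t)
    have h2 : ∑ _t ∈ Finset.Icc (0:ℤ) (N:ℤ), ∏ j, ((k j:ℝ)^2 * (N:ℝ))
        = ((N:ℝ)+1) * (K2 * (N:ℝ)^n) := by
      rw [Finset.sum_const, cardIcc0, Finset.prod_mul_distrib, Finset.prod_const,
        Finset.card_univ, Fintype.card_fin, nsmul_eq_mul, hK2]
      push_cast
      ring
    have h3 : ((N:ℝ)+1) * (K2 * (N:ℝ)^n) ≤ (2*(N:ℝ)) * (K2 * (N:ℝ)^n) :=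
      mul_le_mul_of_nonneg_right (by linarith) (mul_nonneg hK2pos.le (by positivity))
    calc ∑ t ∈ Finset.Icc (0:ℤ) (N:ℤ), ∏ j, (F j t:ℝ)
        ≤ ((N:ℝ)+1) * (K2 * (N:ℝ)^n) := h2 ▸ h1
      _ ≤ (2*(N:ℝ)) * (K2 * (N:ℝ)^n) := h3
      _ = 2 * ((N:ℝ)^(n+1) * K2) := by ring
  -- lower bound for I
  have hIlb : (N:ℝ)^(n+1) * K2 / 2^(n+1) ≤ (I:ℝ) := by
    rw [hIR]
    set M : ℤ := (N:ℤ)/2 with hM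
    have hsub : Finset.Icc (0:ℤ) M ⊆ Finset.Icc (0:ℤ) (N:ℤ) :=
      Finset.Icc_subset_Icc le_rfl (by omega)
    have h0 : ∑ t ∈ Finset.Icc (0:ℤ) M, ∏ j, (F j t:ℝ)
        ≤ ∑ t ∈ Finset.Icc (0:ℤ) (N:ℤ), ∏ j, (F j t:ℝ) :=
      Finset.sum_le_sum_of_subset_of_nonneg hsub (fun t _ _ => by positivity)
    have h1 : ∀ t ∈ Finset.Icc (0:ℤ) M, ∏ j, ((k j:ℝ)^2*(N:ℝ)/2) ≤ ∏ j, (F j t:ℝ) := by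
      intro t ht
      rw [Finset.mem_Icc] at ht
      refine Finset.prod_le_prod (fun j _ => by positivity) (fun j _ => ?_)
      have hz := hFlb j t ht.1 (by omega)
      have hz' := (@Int.cast_le ℝ _ _ _).2 hz
      push_cast at hz'
      linarith
    have h2 := Finset.sum_le_sum h1
    have h3 : ((Finset.Icc (0:ℤ) M).card : ℝ) = (M:ℝ) + 1 := by
      have h3' : ((Finset.Icc (0:ℤ) M).card : ℤ) = M + 1 := by rw [Int.card_Icc]; omega
      exact_mod_cast h3'
    have h4 : ∏ j, ((k j:ℝ)^2*(N:ℝ)/2) = K2 * ((N:ℝ)/2)^n := by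
      simp_rw [mul_div_assoc]
      rw [Finset.prod_mul_distrib, Finset.prod_const, Finset.card_univ, Fintype.card_fin, hK2]
    have h5 : (N:ℝ)/2 ≤ (M:ℝ)+1 := by
      have h5' : (N:ℤ) ≤ 2*M + 2 := by omega
      have := (@Int.cast_le ℝ _ _ _).2 h5'
      push_cast at this
      linarith
    have h6 : ∑ _t ∈ Finset.Icc (0:ℤ) M, (K2 * ((N:ℝ)/2)^n)
        = ((M:ℝ)+1) * (K2 * ((N:ℝ)/2)^n) := by
      rw [Finset.sum_const, nsmul_eq_mul, h3]
    calc (N:ℝ)^(n+1) * K2 / 2^(n+1)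
        = ((N:ℝ)/2) * (K2 * ((N:ℝ)/2)^n) := by
          rw [div_pow]; ring
      _ ≤ ((M:ℝ)+1) * (K2 * ((N:ℝ)/2)^n) :=
          mul_le_mul_of_nonneg_right h5 (mul_nonneg hK2pos.le (by positivity))
      _ = ∑ _t ∈ Finset.Icc (0:ℤ) M, (K2 * ((N:ℝ)/2)^n) := h6.symm
      _ = ∑ t ∈ Finset.Icc (0:ℤ) M, ∏ j, ((k j:ℝ)^2*(N:ℝ)/2) := by
          refine Finset.sum_congr rfl fun t _ => ?_
          rw [h4]
      _ ≤ ∑ t ∈ Finset.Icc (0:ℤ) M, ∏ j, (F j t:ℝ) := h2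
      _ ≤ _ := h0
  -- scalar facts
  have hc0 : (0:ℝ) < ((2:ℝ) ^ (3*n+6))⁻¹ := by positivity
  have hc1 : ((2:ℝ) ^ (3*n+6))⁻¹ ≤ 1 := inv_le_one_of_one_le₀ (one_le_pow₀ (by norm_num))
  have hQpos : (0:ℝ) < (N:ℝ)^(n+1) * Kc := mul_pos (by positivity) hKcpos
  have hRpos : (0:ℝ) < (N:ℝ)^(n+1) * K2 := mul_pos (by positivity) hK2pos
  refine ⟨⟨?_, ?_⟩, by rw [hLcard], ⟨?_, ?_⟩, ?_, ?_⟩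
  · calc ((2:ℝ) ^ (3*n+6))⁻¹ * (N:ℝ)^(n+1) * Kc
        ≤ 1 * (N:ℝ)^(n+1) * Kc := by
          refine mul_le_mul_of_nonneg_right
            (mul_le_mul_of_nonneg_right hc1 (by positivity)) hKcpos.le
      _ = (N:ℝ)^(n+1) * Kc := by ring
      _ ≤ (P.card:ℝ) := hPlb
  · calc (P.card:ℝ) ≤ 2^(n+1) * ((N:ℝ)^(n+1) * Kc) := hPub
      _ ≤ 2^(3*n+6) * ((N:ℝ)^(n+1) * Kc) :=
          mul_le_mul_of_nonneg_right (pow_le_pow_right₀ (by norm_num) (by omega)) hQpos.le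
      _ = 2^(3*n+6) * (N:ℝ)^(n+1) * Kc := by ring
  · calc ((2:ℝ) ^ (3*n+6))⁻¹ * (N:ℝ)^(n+1) * K2
        = ((2:ℝ) ^ (3*n+6))⁻¹ * ((N:ℝ)^(n+1) * K2) := by ring
      _ ≤ ((2:ℝ) ^ (n+1))⁻¹ * ((N:ℝ)^(n+1) * K2) := by
          refine mul_le_mul_of_nonneg_right ?_ hRpos.le
          exact inv_anti₀ (by positivity) (pow_le_pow_right₀ (by norm_num) (by omega))
      _ = (N:ℝ)^(n+1) * K2 / 2^(n+1) := by ring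
      _ ≤ (I:ℝ) := hIlb
  · calc (I:ℝ) ≤ 2 * ((N:ℝ)^(n+1) * K2) := hIub
      _ ≤ 2^(3*n+6) * ((N:ℝ)^(n+1) * K2) := by
          refine mul_le_mul_of_nonneg_right ?_ hRpos.le
          calc (2:ℝ) = 2^1 := by norm_num
            _ ≤ 2^(3*n+6) := pow_le_pow_right₀ (by norm_num) (by omega)
      _ = 2^(3*n+6) * (N:ℝ)^(n+1) * K2 := by ring
  -- the rpow part
  all_goals {
    have hA0 : (0:ℝ) ≤ (P.card:ℝ) := Nat.cast_nonneg _
    have hB0 : (0:ℝ) ≤ (Lset.card:ℝ) := Nat.cast_nonneg _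
    have hn2 : ((n:ℝ)+2) ≠ 0 := by positivity
    have hE0 : (0:ℝ) ≤ (P.card : ℝ) ^ ((2:ℝ)/((n:ℝ)+2)) *
        (Lset.card : ℝ) ^ (((n:ℝ)+1)/((n:ℝ)+2)) :=
      mul_nonneg (Real.rpow_nonneg hA0 _) (Real.rpow_nonneg hB0 _)
    have hEpow : ((P.card : ℝ) ^ ((2:ℝ)/((n:ℝ)+2)) *
        (Lset.card : ℝ) ^ (((n:ℝ)+1)/((n:ℝ)+2)))^(n+2)
        = (P.card:ℝ)^2 * (Lset.card:ℝ)^(n+1) := by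
      rw [← Real.rpow_natCast ((P.card : ℝ) ^ ((2:ℝ)/((n:ℝ)+2)) *
        (Lset.card : ℝ) ^ (((n:ℝ)+1)/((n:ℝ)+2))) (n+2),
        Real.mul_rpow (Real.rpow_nonneg hA0 _) (Real.rpow_nonneg hB0 _),
        ← Real.rpow_mul hA0, ← Real.rpow_mul hB0]
      have c1 : ((2:ℝ)/((n:ℝ)+2)) * ((n+2 : ℕ):ℝ) = ((2:ℕ):ℝ) := by
        push_cast; field_simp
      have c2 : ((((n:ℝ)+1))/((n:ℝ)+2)) * ((n+2 : ℕ):ℝ) = ((n+1 : ℕ):ℝ) := by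
        push_cast; field_simp
      rw [c1, c2, Real.rpow_natCast, Real.rpow_natCast]
    -- identity : R^(n+2) = Q^2 * L^(n+1)
    have hRid : ((N:ℝ)^(n+1) * K2)^(n+2)
        = ((N:ℝ)^(n+1) * Kc)^2 * ((N:ℝ)^n * K2)^(n+1) := by
      rw [hK2eq]; ring
    have hElb : (N:ℝ)^(n+1) * K2 ≤ (P.card : ℝ) ^ ((2:ℝ)/((n:ℝ)+2)) *
        (Lset.card : ℝ) ^ (((n:ℝ)+1)/((n:ℝ)+2)) := by
      refine le_of_pow_le_pow_left₀ (n := n+2) (by omega) hE0 ?_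
      rw [hEpow, hRid, hLcard]
      refine mul_le_mul_of_nonneg_right (pow_le_pow_left₀ hQpos.le hPlb 2)
        (pow_nonneg (mul_nonneg (by positivity) hK2pos.le) _)
    have hEub : (P.card : ℝ) ^ ((2:ℝ)/((n:ℝ)+2)) *
        (Lset.card : ℝ) ^ (((n:ℝ)+1)/((n:ℝ)+2)) ≤ 4 * ((N:ℝ)^(n+1) * K2) := by
      refine le_of_pow_le_pow_left₀ (n := n+2) (by omega)
        (mul_nonneg (by norm_num) hRpos.le) ?_
      rw [hEpow, hLcard]
      calc (P.card:ℝ)^2 * ((N:ℝ)^n * K2)^(n+1)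
          ≤ (2^(n+1) * ((N:ℝ)^(n+1) * Kc))^2 * ((N:ℝ)^n * K2)^(n+1) :=
            mul_le_mul_of_nonneg_right (pow_le_pow_left₀ hA0 hPub 2)
              (pow_nonneg (mul_nonneg (by positivity) hK2pos.le) _)
        _ = 2^(2*n+2) * (((N:ℝ)^(n+1) * K2)^(n+2)) := by
            rw [hK2eq]; ring
        _ ≤ 2^(2*n+4) * (((N:ℝ)^(n+1) * K2)^(n+2)) :=
            mul_le_mul_of_nonneg_right (pow_le_pow_right₀ (by norm_num) (by omega))
              (pow_nonneg hRpos.le _)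
        _ = (4 * ((N:ℝ)^(n+1) * K2))^(n+2) := by
            have pow4 : (2:ℝ)^(2*n+4) = ((2:ℝ)^2)^(n+2) := by
              rw [← pow_mul]
              congr 1
            rw [pow4, show ((2:ℝ)^2) = 4 by norm_num, mul_pow]
            ring
    first
    | · -- lower bound goal
        calc ((2:ℝ) ^ (3*n+6))⁻¹ * (P.card : ℝ) ^ ((2:ℝ)/((n:ℝ)+2)) *
              (Lset.card : ℝ) ^ (((n:ℝ)+1)/((n:ℝ)+2))
            ≤ ((2:ℝ) ^ (3*n+6))⁻¹ * (4 * ((N:ℝ)^(n+1) * K2)) := by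
              rw [mul_assoc]
              exact mul_le_mul_of_nonneg_left hEub hc0.le
          _ ≤ ((2:ℝ) ^ (n+3))⁻¹ * (4 * ((N:ℝ)^(n+1) * K2)) := by
              refine mul_le_mul_of_nonneg_right
                (inv_anti₀ (by positivity)
                  (pow_le_pow_right₀ (by norm_num) (by omega)))
                (mul_nonneg (by norm_num) hRpos.le)
          _ = (N:ℝ)^(n+1) * K2 / 2^(n+1) := by
              rw [pow_succ, pow_succ]
              field_simp
              ring
          _ ≤ (I:ℝ) := hIlb
    | · calc (I:ℝ) ≤ 2 * ((N:ℝ)^(n+1) * K2) := hIub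
          _ ≤ 2 * ((P.card : ℝ) ^ ((2:ℝ)/((n:ℝ)+2)) *
                (Lset.card : ℝ) ^ (((n:ℝ)+1)/((n:ℝ)+2))) :=
              mul_le_mul_of_nonneg_left hElb (by norm_num)
          _ ≤ 2^(3*n+6) * ((P.card : ℝ) ^ ((2:ℝ)/((n:ℝ)+2)) *
                (Lset.card : ℝ) ^ (((n:ℝ)+1)/((n:ℝ)+2))) := by
              refine mul_le_mul_of_nonneg_right ?_ hE0
              calc (2:ℝ) = 2^1 := by norm_num
                _ ≤ 2^(3*n+6) := pow_le_pow_right₀ (by norm_num) (by omega)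
          _ = 2^(3*n+6) * (P.card : ℝ) ^ ((2:ℝ)/((n:ℝ)+2)) *
                (Lset.card : ℝ) ^ (((n:ℝ)+1)/((n:ℝ)+2)) := by ring
  }
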